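/- Let n and l be positive integers with l odd and 2l < n + 1, and set t₀ = (n + 1 − 2l)/(n + 1). Assume |(t₀ + 1)^{n+1−l}·(t₀ − 1)^l + 1| < 1. Then for every real t with 0 ≤ t < 1 one has |(t + 1)^{n+1−l}·(t − 1)^l + 1| < 1, and at t = 1 the value (1 + 1)^{n+1−l}·(1 − 1)^l + 1 equals 1 > 0. -/

import Mathlib

/-- Verification of assumption (iii) for Example 4.4: with `l` odd, `0 < l`,
`2l < n+1`, `t₀ = (n+1−2l)/(n+1)` and `|f(t₀)| < 1` where
`f(t) = (t+1)^{n+1−l}(t−1)^l + 1`, one has `|f(t)| < 1` for all `0 ≤ t < 1`, and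
`f(1) = 1 > 0`. -/
theorem stmt14 (n l : ℕ) (hn : 0 < n) (hl : 0 < l) (hodd : Odd l)
    (h2l : 2 * l < n + 1) (t₀ : ℝ) (ht₀ : t₀ = ((n : ℝ) + 1 - 2 * l) / ((n : ℝ) + 1))
    (habs : |(t₀ + 1) ^ (n + 1 - l) * (t₀ - 1) ^ l + 1| < 1) :
    (∀ t : ℝ, 0 ≤ t → t < 1 → |(t + 1) ^ (n + 1 - l) * (t - 1) ^ l + 1| < 1) ∧
    ((1 : ℝ) + 1) ^ (n + 1 - l) * ((1 : ℝ) - 1) ^ l + 1 = 1 ∧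
    (0 : ℝ) < 1 := by
  have hN : (0:ℝ) < (n:ℝ) + 1 := by positivity
  set m := n + 1 - l with hm
  have hml : m + l = n + 1 := by omega
  have hmpos : 0 < m := by omega
  have hmlR : (m:ℝ) + (l:ℝ) = (n:ℝ) + 1 := by exact_mod_cast congrArg (Nat.cast : ℕ → ℝ) hml
  set A : ℝ := 2 * m / ((n:ℝ)+1) with hAdef
  set B : ℝ := 2 * l / ((n:ℝ)+1) with hBdef
  have hApos : 0 < A := by
    apply div_pos _ hN; positivity
  have hBpos : 0 < B := by
    apply div_pos _ hN; positivity
  have hA : t₀ + 1 = A := by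
    rw [ht₀, hAdef]
    field_simp
    linarith [hmlR]
  have hB : 1 - t₀ = B := by
    rw [ht₀, hBdef]
    field_simp
    ring
  -- key AM-GM bound
  have key : ∀ t : ℝ, 0 ≤ t → t ≤ 1 → (t+1)^m * (1-t)^l ≤ A^m * B^l := by
    intro t ht0 ht1
    set x : ℝ := (t+1)/A with hxdef
    set y : ℝ := (1-t)/B with hydef
    clear_value x y
    have hx : 0 ≤ x := by
      rw [hxdef]; exact div_nonneg (by linarith) hApos.le
    have hy : 0 ≤ y := by
      rw [hydef]; exact div_nonneg (by linarith) hBpos.le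
    have hw1 : (0:ℝ) ≤ (m:ℝ)/((n:ℝ)+1) := by positivity
    have hw2 : (0:ℝ) ≤ (l:ℝ)/((n:ℝ)+1) := by positivity
    have hw : (m:ℝ)/((n:ℝ)+1) + (l:ℝ)/((n:ℝ)+1) = 1 := by
      field_simp
      linarith [hmlR]
    have geo := Real.geom_mean_le_arith_mean2_weighted hw1 hw2 hx hy hw
    have hrhs : (m:ℝ)/((n:ℝ)+1) * x + (l:ℝ)/((n:ℝ)+1) * y = 1 := by
      rw [hxdef, hydef, hAdef, hBdef]
      have hm0 : (m:ℝ) ≠ 0 := by positivity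
      have hl0 : (l:ℝ) ≠ 0 := by positivity
      field_simp
      ring
    rw [hrhs] at geo
    have hpow : x ^ m * y ^ l ≤ 1 := by
      have h1 : x ^ ((m:ℝ)/((n:ℝ)+1)) * y ^ ((l:ℝ)/((n:ℝ)+1)) ≥ 0 := by positivity
      have h2 := pow_le_one₀ h1 geo (n := n+1)
      have h3 : (x ^ ((m:ℝ)/((n:ℝ)+1)) * y ^ ((l:ℝ)/((n:ℝ)+1))) ^ (n+1)
          = x ^ m * y ^ l := by
        rw [mul_pow, ← Real.rpow_natCast (x ^ ((m:ℝ)/((n:ℝ)+1))) (n+1),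
          ← Real.rpow_natCast (y ^ ((l:ℝ)/((n:ℝ)+1))) (n+1),
          ← Real.rpow_mul hx, ← Real.rpow_mul hy]
        have e1 : (m:ℝ)/((n:ℝ)+1) * ((n:ℕ)+1 : ℕ) = (m:ℝ) := by
          push_cast; field_simp
        have e2 : (l:ℝ)/((n:ℝ)+1) * ((n:ℕ)+1 : ℕ) = (l:ℝ) := by
          push_cast; field_simp
        rw [e1, e2, Real.rpow_natCast, Real.rpow_natCast]
      rw [h3] at h2
      exact h2
    have hxA : t + 1 = x * A := by
      rw [hxdef]; field_simp
    have hyB : 1 - t = y * B := by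
      rw [hydef]; field_simp
    calc (t+1)^m * (1-t)^l = (x^m * y^l) * (A^m * B^l) := by
          rw [hxA, hyB]; ring
      _ ≤ 1 * (A^m * B^l) := by
          apply mul_le_mul_of_nonneg_right hpow; positivity
      _ = A^m * B^l := by ring
  have hoddpow : ∀ s : ℝ, (s - 1)^l = -((1-s)^l) := by
    intro s
    rw [show s - 1 = -(1-s) by ring, hodd.neg_pow]
  have hC : A^m * B^l < 2 := by
    rw [hoddpow, hA, hB] at habs
    rw [abs_lt] at habs
    linarith [habs.1]
  refine ⟨?_, ?_, by norm_num⟩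
  · intro t ht0 ht1
    rw [hoddpow, abs_lt]
    have hpos : 0 < (t+1)^m * (1-t)^l := by
      have : (0:ℝ) < t + 1 := by linarith
      have : (0:ℝ) < 1 - t := by linarith
      positivity
    have hle := key t ht0 ht1.le
    constructor <;> nlinarith
  · have hz : ((1:ℝ) - 1) ^ l = 0 := by
      rw [sub_self, zero_pow (by omega : l ≠ 0)]
    rw [hz]
    ring
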